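/- arXiv:1908.06431 — 6 statements merged into one kernel-verified Lean document; each statement's English description precedes it below -/
import Mathlib

section
/- For every α ∈ (0,1) and all r, r₀ ∈ ℝ, one has c₁·(r−r₀)² ≤ φ_α(r) − φ_α(r₀) − ψ_α(r₀)·(r−r₀) ≤ c₂·(r−r₀)², where c₁ = min{α, 1−α} and c₂ = max{α, 1−α}. -/
/-- For every α ∈ (0,1) and all r, r₀ ∈ ℝ,
c₁·(r−r₀)² ≤ φ_α(r) − φ_α(r₀) − ψ_α(r₀)·(r−r₀) ≤ c₂·(r−r₀)²,
where φ_α(r) = |α − 𝟙(r<0)|·r², ψ_α(r) = 2|α − 𝟙(r<0)|·r,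
c₁ = min{α, 1−α} and c₂ = max{α, 1−α}. -/
theorem expectile_loss_quadratic_bounds (α : ℝ) (hα : α ∈ Set.Ioo (0 : ℝ) 1) (r r₀ : ℝ) :
    min α (1 - α) * (r - r₀) ^ 2 ≤
        |α - (if r < 0 then (1 : ℝ) else 0)| * r ^ 2
          - |α - (if r₀ < 0 then (1 : ℝ) else 0)| * r₀ ^ 2
          - (2 * |α - (if r₀ < 0 then (1 : ℝ) else 0)| * r₀) * (r - r₀) ∧
      |α - (if r < 0 then (1 : ℝ) else 0)| * r ^ 2
          - |α - (if r₀ < 0 then (1 : ℝ) else 0)| * r₀ ^ 2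
          - (2 * |α - (if r₀ < 0 then (1 : ℝ) else 0)| * r₀) * (r - r₀) ≤
        max α (1 - α) * (r - r₀) ^ 2 := by
  obtain ⟨h0, h1⟩ := hα
  have habs1 : |α - (1:ℝ)| = 1 - α := by rw [abs_of_nonpos (by linarith)]; ring
  have habs0 : |α - (0:ℝ)| = α := by rw [abs_of_nonneg (by linarith), sub_zero]
  rcases le_total α (1 - α) with hc | hc
  · rw [min_eq_left hc, max_eq_right hc]
    split_ifs with hr hr0 hr0 <;> (try push_neg at *) <;> simp only [habs1, habs0]
    · constructor <;> nlinarith [sq_nonneg (r - r₀)]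
    · have key : (0:ℝ) ≤ r₀ ^ 2 - 2 * r * r₀ := by nlinarith
      constructor <;> nlinarith [mul_nonneg (by linarith : (0:ℝ) ≤ 1 - 2 * α) key,
        mul_nonneg (by linarith : (0:ℝ) ≤ 1 - 2 * α) (sq_nonneg r)]
    · have key : (0:ℝ) ≤ r₀ ^ 2 - 2 * r * r₀ := by nlinarith
      constructor <;> nlinarith [mul_nonneg (by linarith : (0:ℝ) ≤ 1 - 2 * α) key,
        mul_nonneg (by linarith : (0:ℝ) ≤ 1 - 2 * α) (sq_nonneg r)]
    · constructor <;> nlinarith [sq_nonneg (r - r₀)]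
  · rw [min_eq_right hc, max_eq_left hc]
    split_ifs with hr hr0 hr0 <;> (try push_neg at *) <;> simp only [habs1, habs0]
    · constructor <;> nlinarith [sq_nonneg (r - r₀)]
    · have key : (0:ℝ) ≤ r₀ ^ 2 - 2 * r * r₀ := by nlinarith
      constructor <;> nlinarith [mul_nonneg (by linarith : (0:ℝ) ≤ 2 * α - 1) key,
        mul_nonneg (by linarith : (0:ℝ) ≤ 2 * α - 1) (sq_nonneg r)]
    · have key : (0:ℝ) ≤ r₀ ^ 2 - 2 * r * r₀ := by nlinarith
      constructor <;> nlinarith [mul_nonneg (by linarith : (0:ℝ) ≤ 2 * α - 1) key,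
        mul_nonneg (by linarith : (0:ℝ) ≤ 2 * α - 1) (sq_nonneg r)]
    · constructor <;> nlinarith [sq_nonneg (r - r₀)]
end

section
/- Let α ∈ (0,1) and let ε be a real random variable on a probability space with E[ε²] < ∞ and E[ψ_α(ε)] = 0. Then for every t ∈ ℝ, c₁·t² ≤ E[φ_α(ε − t) − φ_α(ε)] ≤ c₂·t², where c₁ = min{α, 1−α} and c₂ = max{α, 1−α}. -/
open MeasureTheory

lemma expectile_key (α r t : ℝ) (h0 : 0 < α) (h1 : α < 1) :
    min α (1 - α) * t ^ 2 ≤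
      |α - (if r - t < 0 then (1:ℝ) else 0)| * (r - t) ^ 2
        - |α - (if r < 0 then (1:ℝ) else 0)| * r ^ 2
        + t * (2 * |α - (if r < 0 then (1:ℝ) else 0)| * r) ∧
    |α - (if r - t < 0 then (1:ℝ) else 0)| * (r - t) ^ 2
        - |α - (if r < 0 then (1:ℝ) else 0)| * r ^ 2
        + t * (2 * |α - (if r < 0 then (1:ℝ) else 0)| * r) ≤ max α (1 - α) * t ^ 2 := by
  have ha1 : |α - (1:ℝ)| = 1 - α := by rw [abs_sub_comm]; exact abs_of_pos (by linarith)
  have ha0 : |α - (0:ℝ)| = α := by rw [sub_zero]; exact abs_of_pos h0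
  rcases le_total α (1 - α) with hm | hm
  · rw [min_eq_left hm, max_eq_right hm]
    have hA : (0:ℝ) ≤ 1 - 2*α := by linarith
    rcases lt_or_ge r 0 with hr | hr <;> rcases lt_or_ge (r - t) 0 with hrt | hrt
    · rw [if_pos hr, if_pos hrt, ha1]
      constructor <;> nlinarith [sq_nonneg t, hm]
    · rw [if_pos hr, if_neg (not_lt.2 hrt), ha1, ha0]
      have hp : (0:ℝ) ≤ (-r) * (r - 2*t) :=
        mul_nonneg (by linarith) (by linarith)
      constructor <;>
        nlinarith [mul_nonneg hA hp, mul_nonneg hA (sq_nonneg (r - t)), sq_nonneg t]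
    · rw [if_neg (not_lt.2 hr), if_pos hrt, ha1, ha0]
      have hp : (0:ℝ) ≤ r * (2*t - r) := mul_nonneg hr (by linarith)
      constructor <;>
        nlinarith [mul_nonneg hA hp, mul_nonneg hA (sq_nonneg (r - t)), sq_nonneg t]
    · rw [if_neg (not_lt.2 hr), if_neg (not_lt.2 hrt), ha0]
      constructor <;> nlinarith [sq_nonneg t, hm]
  · rw [min_eq_right hm, max_eq_left hm]
    have hA : (0:ℝ) ≤ 2*α - 1 := by linarith
    rcases lt_or_ge r 0 with hr | hr <;> rcases lt_or_ge (r - t) 0 with hrt | hrt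
    · rw [if_pos hr, if_pos hrt, ha1]
      constructor <;> nlinarith [sq_nonneg t, hm]
    · rw [if_pos hr, if_neg (not_lt.2 hrt), ha1, ha0]
      have hp : (0:ℝ) ≤ (-r) * (r - 2*t) :=
        mul_nonneg (by linarith) (by linarith)
      constructor <;>
        nlinarith [mul_nonneg hA hp, mul_nonneg hA (sq_nonneg (r - t)), sq_nonneg t]
    · rw [if_neg (not_lt.2 hr), if_pos hrt, ha1, ha0]
      have hp : (0:ℝ) ≤ r * (2*t - r) := mul_nonneg hr (by linarith)
      constructor <;>
        nlinarith [mul_nonneg hA hp, mul_nonneg hA (sq_nonneg (r - t)), sq_nonneg t]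
    · rw [if_neg (not_lt.2 hr), if_neg (not_lt.2 hrt), ha0]
      constructor <;> nlinarith [sq_nonneg t, hm]

lemma expectile_wle (α : ℝ) (h0 : 0 < α) (h1 : α < 1) (r : ℝ) :
    |α - (if r < 0 then (1:ℝ) else 0)| ≤ 1 := by
  rw [abs_le]; constructor <;> split_ifs <;> linarith

lemma expectile_f_meas (α t : ℝ) : Measurable (fun r : ℝ =>
    |α - (if r - t < 0 then (1:ℝ) else 0)| * (r - t) ^ 2
      - |α - (if r < 0 then (1:ℝ) else 0)| * r ^ 2) := by
  have hs : MeasurableSet {r : ℝ | r - t < 0} :=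
    measurableSet_lt (measurable_id.sub measurable_const) measurable_const
  have hs0 : MeasurableSet {r : ℝ | r < 0} :=
    measurableSet_lt measurable_id measurable_const
  exact (((measurable_const.sub (Measurable.ite hs measurable_const
      measurable_const)).abs.mul ((measurable_id.sub measurable_const).pow_const 2)).sub
    ((measurable_const.sub (Measurable.ite hs0 measurable_const
      measurable_const)).abs.mul (measurable_id.pow_const 2)))

lemma expectile_g_meas (α : ℝ) : Measurable (fun r : ℝ =>
    2 * |α - (if r < 0 then (1:ℝ) else 0)| * r) := by
  have hs0 : MeasurableSet {r : ℝ | r < 0} :=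
    measurableSet_lt measurable_id measurable_const
  exact ((measurable_const.mul (measurable_const.sub (Measurable.ite hs0 measurable_const
      measurable_const)).abs).mul measurable_id)

/-- Let α ∈ (0,1) and let ε be a real random variable with
E[ε²] < ∞ and E[ψ_α(ε)] = 0. Then for every t ∈ ℝ,
c₁·t² ≤ E[φ_α(ε − t) − φ_α(ε)] ≤ c₂·t², where c₁ = min{α,1−α},
c₂ = max{α,1−α}, φ_α(r) = |α − 𝟙(r<0)|·r² and ψ_α(r) = 2|α − 𝟙(r<0)|·r. -/
theorem expectile_population_excess_risk_bounds
    {Ω : Type*} [MeasurableSpace Ω] (μ : Measure Ω) [IsProbabilityMeasure μ]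
    (α : ℝ) (hα : α ∈ Set.Ioo (0 : ℝ) 1)
    (ε : Ω → ℝ) (hmeas : AEStronglyMeasurable ε μ)
    (hL2 : Integrable (fun ω => (ε ω) ^ 2) μ)
    (hzero : ∫ ω, 2 * |α - (if ε ω < 0 then (1 : ℝ) else 0)| * ε ω ∂μ = 0)
    (t : ℝ) :
    min α (1 - α) * t ^ 2 ≤
        ∫ ω, (|α - (if ε ω - t < 0 then (1 : ℝ) else 0)| * (ε ω - t) ^ 2
          - |α - (if ε ω < 0 then (1 : ℝ) else 0)| * (ε ω) ^ 2) ∂μ ∧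
      ∫ ω, (|α - (if ε ω - t < 0 then (1 : ℝ) else 0)| * (ε ω - t) ^ 2
          - |α - (if ε ω < 0 then (1 : ℝ) else 0)| * (ε ω) ^ 2) ∂μ ≤
        max α (1 - α) * t ^ 2 := by
  obtain ⟨h0, h1⟩ := hα
  have hεae : AEMeasurable ε μ := hmeas.aemeasurable
  -- integrability of ε
  have hε1 : Integrable ε μ := by
    have hb : Integrable (fun ω => (ε ω ^ 2 + 1) / 2) μ :=
      (hL2.add (integrable_const 1)).div_const 2
    exact hb.mono' hmeas (Filter.Eventually.of_forall fun ω => by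
      rw [Real.norm_eq_abs]
      nlinarith [sq_nonneg (|ε ω| - 1), sq_abs (ε ω), abs_nonneg (ε ω)])
  -- g = ψ_α ∘ ε is integrable
  have hg_sm : AEStronglyMeasurable
      (fun ω => 2 * |α - (if ε ω < 0 then (1:ℝ) else 0)| * ε ω) μ :=
    ((expectile_g_meas α).comp_aemeasurable hεae).aestronglyMeasurable
  have hg_int : Integrable (fun ω => 2 * |α - (if ε ω < 0 then (1:ℝ) else 0)| * ε ω) μ := by
    refine ((hε1.norm.const_mul 2).mono' hg_sm (Filter.Eventually.of_forall fun ω => ?_))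
    rw [Real.norm_eq_abs, abs_mul, abs_mul, abs_abs, Real.norm_eq_abs]
    have := expectile_wle α h0 h1 (ε ω)
    have h2 : |(2:ℝ)| = 2 := by norm_num
    rw [h2]
    nlinarith [abs_nonneg (ε ω), abs_nonneg (α - (if ε ω < 0 then (1:ℝ) else 0))]
  -- f = φ_α(ε - t) - φ_α(ε) is integrable
  have hε2t : Integrable (fun ω => (ε ω - t) ^ 2) μ := by
    have he : (fun ω => (ε ω - t) ^ 2) = fun ω => ε ω ^ 2 + (-2*t) * ε ω + t^2 := by
      funext ω; ring
    rw [he]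
    exact (hL2.add (hε1.const_mul _)).add (integrable_const _)
  have hf_sm : AEStronglyMeasurable (fun ω =>
      |α - (if ε ω - t < 0 then (1:ℝ) else 0)| * (ε ω - t) ^ 2
        - |α - (if ε ω < 0 then (1:ℝ) else 0)| * (ε ω) ^ 2) μ :=
    ((expectile_f_meas α t).comp_aemeasurable hεae).aestronglyMeasurable
  have hf_int : Integrable (fun ω =>
      |α - (if ε ω - t < 0 then (1:ℝ) else 0)| * (ε ω - t) ^ 2
        - |α - (if ε ω < 0 then (1:ℝ) else 0)| * (ε ω) ^ 2) μ := by
    refine (hε2t.add hL2).mono' hf_sm (Filter.Eventually.of_forall fun ω => ?_)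
    rw [Real.norm_eq_abs]
    have hw1 := expectile_wle α h0 h1 (ε ω - t)
    have hw2 := expectile_wle α h0 h1 (ε ω)
    have hn1 := abs_nonneg (α - (if ε ω - t < 0 then (1:ℝ) else 0))
    have hn2 := abs_nonneg (α - (if ε ω < 0 then (1:ℝ) else 0))
    rw [abs_le]
    simp only [Pi.add_apply]
    constructor <;> nlinarith [sq_nonneg (ε ω - t), sq_nonneg (ε ω)]
  -- the shifted integrand f + t·g
  have hfg_int : Integrable (fun ω =>
      (|α - (if ε ω - t < 0 then (1:ℝ) else 0)| * (ε ω - t) ^ 2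
        - |α - (if ε ω < 0 then (1:ℝ) else 0)| * (ε ω) ^ 2)
      + t * (2 * |α - (if ε ω < 0 then (1:ℝ) else 0)| * ε ω)) μ :=
    hf_int.add (hg_int.const_mul t)
  have hsum : ∫ ω, ((|α - (if ε ω - t < 0 then (1:ℝ) else 0)| * (ε ω - t) ^ 2
        - |α - (if ε ω < 0 then (1:ℝ) else 0)| * (ε ω) ^ 2)
      + t * (2 * |α - (if ε ω < 0 then (1:ℝ) else 0)| * ε ω)) ∂μ
      = ∫ ω, (|α - (if ε ω - t < 0 then (1:ℝ) else 0)| * (ε ω - t) ^ 2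
        - |α - (if ε ω < 0 then (1:ℝ) else 0)| * (ε ω) ^ 2) ∂μ := by
    rw [integral_add hf_int (hg_int.const_mul t), integral_const_mul, hzero, mul_zero, add_zero]
  constructor
  · calc min α (1 - α) * t ^ 2 = ∫ _ω, min α (1 - α) * t ^ 2 ∂μ := by
          rw [integral_const]; simp
      _ ≤ _ := by
          rw [← hsum]
          exact integral_mono (integrable_const _) hfg_int
            (fun ω => (expectile_key α (ε ω) t h0 h1).1)
  · calc ∫ ω, (|α - (if ε ω - t < 0 then (1:ℝ) else 0)| * (ε ω - t) ^ 2
          - |α - (if ε ω < 0 then (1:ℝ) else 0)| * (ε ω) ^ 2) ∂μ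
        = ∫ ω, ((|α - (if ε ω - t < 0 then (1:ℝ) else 0)| * (ε ω - t) ^ 2
          - |α - (if ε ω < 0 then (1:ℝ) else 0)| * (ε ω) ^ 2)
          + t * (2 * |α - (if ε ω < 0 then (1:ℝ) else 0)| * ε ω)) ∂μ := hsum.symm
      _ ≤ ∫ _ω, max α (1 - α) * t ^ 2 ∂μ :=
          integral_mono hfg_int (integrable_const _)
            (fun ω => (expectile_key α (ε ω) t h0 h1).2)
      _ = max α (1 - α) * t ^ 2 := by rw [integral_const]; simp
end

section
/- Let α ∈ (0,1) and let Y be a real random variable on a probability space with E[Y²] < ∞. Then the function m ↦ E[φ_α(Y − m)] has a unique global minimizer on ℝ; i.e., there exists a unique m* ∈ ℝ (the α-th expectile of Y) such that E[φ_α(Y − m*)] ≤ E[φ_α(Y − m)] for all m ∈ ℝ. -/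
open MeasureTheory Set Filter

/-- The expectile loss, written as a combination of positive/negative parts. -/
noncomputable def expPhi (α : ℝ) (r : ℝ) : ℝ :=
  α * (max r 0) ^ 2 + (1 - α) * (max (-r) 0) ^ 2

lemma expPhi_eq {α : ℝ} (hα : α ∈ Set.Ioo (0 : ℝ) 1) (r : ℝ) :
    |α - (if r < 0 then (1 : ℝ) else 0)| * r ^ 2 = expPhi α r := by
  obtain ⟨h0, h1⟩ := hα
  unfold expPhi
  by_cases h : r < 0
  · rw [if_pos h, abs_of_nonpos (by linarith), max_eq_right h.le,
      max_eq_left (by linarith)]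
    ring
  · push_neg at h
    rw [if_neg (not_lt.mpr h), sub_zero, abs_of_pos h0, max_eq_left h,
      max_eq_right (by linarith : -r ≤ 0)]
    ring

lemma convexOn_posPartSq : ConvexOn ℝ Set.univ (fun r : ℝ => (max r 0) ^ 2) := by
  refine ⟨convex_univ, fun x _ y _ a b ha hb hab => ?_⟩
  simp only [smul_eq_mul]
  have hx : x ≤ max x 0 := le_max_left _ _
  have hy : y ≤ max y 0 := le_max_left _ _
  have hx0 : (0 : ℝ) ≤ max x 0 := le_max_right _ _
  have hy0 : (0 : ℝ) ≤ max y 0 := le_max_right _ _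
  have hle : max (a * x + b * y) 0 ≤ a * max x 0 + b * max y 0 := by
    apply max_le
    · nlinarith
    · nlinarith
  have h0 : (0 : ℝ) ≤ max (a * x + b * y) 0 := le_max_right _ _
  nlinarith [sq_nonneg (max x 0 - max y 0), mul_nonneg ha hb]

lemma continuous_expPhi (α : ℝ) : Continuous (expPhi α) := by
  unfold expPhi
  fun_prop

lemma expPhi_nonneg {α : ℝ} (hα : α ∈ Set.Ioo (0 : ℝ) 1) (r : ℝ) : 0 ≤ expPhi α r := by
  obtain ⟨h0, h1⟩ := hα
  unfold expPhi
  nlinarith [sq_nonneg (max r 0), sq_nonneg (max (-r) 0)]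

lemma expPhi_le_sq {α : ℝ} (hα : α ∈ Set.Ioo (0 : ℝ) 1) (r : ℝ) : expPhi α r ≤ r ^ 2 := by
  obtain ⟨h0, h1⟩ := hα
  unfold expPhi
  rcases le_total r 0 with h | h
  · rw [max_eq_right h, max_eq_left (by linarith)]
    nlinarith [sq_nonneg r]
  · rw [max_eq_left h, max_eq_right (by linarith : -r ≤ 0)]
    nlinarith [sq_nonneg r]

lemma sq_ge_expPhi {α : ℝ} (hα : α ∈ Set.Ioo (0 : ℝ) 1) (r : ℝ) :
    min α (1 - α) * r ^ 2 ≤ expPhi α r := by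
  obtain ⟨h0, h1⟩ := hα
  have hca : min α (1 - α) ≤ α := min_le_left _ _
  have hcb : min α (1 - α) ≤ 1 - α := min_le_right _ _
  unfold expPhi
  rcases le_total r 0 with h | h
  · rw [max_eq_right h, max_eq_left (by linarith)]
    nlinarith [sq_nonneg r]
  · rw [max_eq_left h, max_eq_right (by linarith : -r ≤ 0)]
    nlinarith [sq_nonneg r]

lemma strictConvexOn_expPhi {α : ℝ} (hα : α ∈ Set.Ioo (0 : ℝ) 1) :
    StrictConvexOn ℝ Set.univ (expPhi α) := by
  obtain ⟨h0, h1⟩ := hα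
  set c : ℝ := min α (1 - α) with hc
  have hcpos : 0 < c := lt_min h0 (by linarith)
  have hca : c ≤ α := min_le_left _ _
  have hcb : c ≤ 1 - α := min_le_right _ _
  -- the strictly convex quadratic part
  have hsq : StrictConvexOn ℝ Set.univ fun r : ℝ => c * r ^ 2 := by
    refine ⟨convex_univ, fun x _ y _ hxy a b ha hb hab => ?_⟩
    simp only [smul_eq_mul]
    have hd : (0 : ℝ) < (x - y) ^ 2 :=
      lt_of_le_of_ne (sq_nonneg _) (Ne.symm (pow_ne_zero 2 (sub_ne_zero_of_ne hxy)))
    have hb' : b = 1 - a := by linarith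
    have e : a * (c * x ^ 2) + b * (c * y ^ 2) - c * (a * x + b * y) ^ 2
        = c * a * b * (x - y) ^ 2 := by rw [hb']; ring
    linarith [mul_pos (mul_pos (mul_pos hcpos ha) hb) hd]
  -- the convex remainder
  have hneg : ConvexOn ℝ Set.univ fun r : ℝ => (max (-r) 0) ^ 2 := by
    have := convexOn_posPartSq.comp_affineMap (-(AffineMap.id ℝ ℝ))
    simpa [Function.comp_def, Pi.neg_apply] using this
  have hpsi : ConvexOn ℝ Set.univ fun r : ℝ =>
      (α - c) * (max r 0) ^ 2 + ((1 - α) - c) * (max (-r) 0) ^ 2 := by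
    have h1' := convexOn_posPartSq.smul (by linarith : (0:ℝ) ≤ α - c)
    have h2' := hneg.smul (by linarith : (0:ℝ) ≤ (1 - α) - c)
    simpa [smul_eq_mul, Pi.add_def] using h1'.add h2'
  have hadd := hsq.add_convexOn hpsi
  have heq : expPhi α = (fun r : ℝ => c * r ^ 2) + (fun r : ℝ =>
      (α - c) * (max r 0) ^ 2 + ((1 - α) - c) * (max (-r) 0) ^ 2) := by
    funext r
    simp only [Pi.add_apply]
    unfold expPhi
    rcases le_total r 0 with h | h
    · rw [max_eq_right h, max_eq_left (by linarith)]
      ring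
    · rw [max_eq_left h, max_eq_right (by linarith : -r ≤ 0)]
      ring
  rw [heq]
  exact hadd

/-- Let α ∈ (0,1) and let Y be a real random variable with
E[Y²] < ∞. Then m ↦ E[φ_α(Y − m)] has a unique global minimizer on ℝ
(the α-th expectile of Y), where φ_α(r) = |α − 𝟙(r<0)|·r². -/
theorem expectile_exists_unique
    {Ω : Type*} [MeasurableSpace Ω] (μ : Measure Ω) [IsProbabilityMeasure μ]
    (α : ℝ) (hα : α ∈ Set.Ioo (0 : ℝ) 1)
    (Y : Ω → ℝ) (hmeas : AEStronglyMeasurable Y μ)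
    (hL2 : Integrable (fun ω => (Y ω) ^ 2) μ) :
    ∃! m : ℝ, ∀ m' : ℝ,
      ∫ ω, |α - (if Y ω - m < 0 then (1 : ℝ) else 0)| * (Y ω - m) ^ 2 ∂μ ≤
        ∫ ω, |α - (if Y ω - m' < 0 then (1 : ℝ) else 0)| * (Y ω - m') ^ 2 ∂μ := by
  obtain ⟨h0, h1⟩ := hα
  set c : ℝ := min α (1 - α) with hc
  have hcpos : 0 < c := lt_min h0 (by linarith)
  -- Y is integrable
  have hYint : Integrable Y μ := by
    refine (hL2.add (integrable_const 1)).mono' hmeas (ae_of_all _ fun ω => ?_)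
    simp only [Pi.add_apply, Real.norm_eq_abs]
    nlinarith [sq_abs (Y ω), sq_nonneg (|Y ω| - 1), abs_nonneg (Y ω)]
  -- integrability of (Y - m)^2
  have hsqint : ∀ m : ℝ, Integrable (fun ω => (Y ω - m) ^ 2) μ := by
    intro m
    have : (fun ω => (Y ω - m) ^ 2) = fun ω => (Y ω) ^ 2 - (2 * m) * Y ω + m ^ 2 := by
      funext ω; ring
    rw [this]
    exact (hL2.sub (hYint.const_mul _)).add (integrable_const _)
  -- integrability of expPhi α (Y - m)
  have hint : ∀ m : ℝ, Integrable (fun ω => expPhi α (Y ω - m)) μ := by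
    intro m
    refine (hsqint m).mono' ?_ (ae_of_all _ fun ω => ?_)
    · exact (continuous_expPhi α).comp_aestronglyMeasurable
        (hmeas.sub aestronglyMeasurable_const)
    · rw [Real.norm_eq_abs, abs_of_nonneg (expPhi_nonneg ⟨h0, h1⟩ _)]
      exact expPhi_le_sq ⟨h0, h1⟩ _
  set F : ℝ → ℝ := fun m => ∫ ω, expPhi α (Y ω - m) ∂μ with hF
  have key : ∀ m : ℝ,
      ∫ ω, |α - (if Y ω - m < 0 then (1 : ℝ) else 0)| * (Y ω - m) ^ 2 ∂μ = F m := by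
    intro m
    exact integral_congr_ae (ae_of_all _ fun ω => expPhi_eq ⟨h0, h1⟩ _)
  -- F is strictly convex
  have hφ := strictConvexOn_expPhi ⟨h0, h1⟩
  have hFconv : StrictConvexOn ℝ Set.univ F := by
    refine ⟨convex_univ, fun x _ y _ hxy a b ha hb hab => ?_⟩
    simp only [smul_eq_mul]
    have hpt : ∀ ω, expPhi α (Y ω - (a * x + b * y)) <
        a * expPhi α (Y ω - x) + b * expPhi α (Y ω - y) := by
      intro ω
      have harg : Y ω - (a * x + b * y) = a • (Y ω - x) + b • (Y ω - y) := by
        simp only [smul_eq_mul]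
        linear_combination (-(Y ω)) * hab
      rw [harg]
      have hne : Y ω - x ≠ Y ω - y := fun h => hxy (by linarith)
      simpa [smul_eq_mul] using
        hφ.2 (Set.mem_univ (Y ω - x)) (Set.mem_univ (Y ω - y)) hne ha hb hab
    have hg : Integrable (fun ω => a * expPhi α (Y ω - x) + b * expPhi α (Y ω - y)) μ :=
      ((hint x).const_mul a).add ((hint y).const_mul b)
    have hf' : Integrable (fun ω => expPhi α (Y ω - (a * x + b * y))) μ := hint _
    have hlt : F (a * x + b * y) <
        ∫ ω, (a * expPhi α (Y ω - x) + b * expPhi α (Y ω - y)) ∂μ := by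
      have hpos : 0 < ∫ ω, ((a * expPhi α (Y ω - x) + b * expPhi α (Y ω - y)) -
          expPhi α (Y ω - (a * x + b * y))) ∂μ := by
        have hsub : Integrable (fun ω =>
            (a * expPhi α (Y ω - x) + b * expPhi α (Y ω - y)) -
            expPhi α (Y ω - (a * x + b * y))) μ := hg.sub hf'
        refine (integral_pos_iff_support_of_nonneg (fun ω => ?_) hsub).mpr ?_
        · have := hpt ω
          simp only [Pi.zero_apply]
          linarith
        · have hsupp : Function.support (fun ω =>
              (a * expPhi α (Y ω - x) + b * expPhi α (Y ω - y)) -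
              expPhi α (Y ω - (a * x + b * y))) = Set.univ := by
            ext ω
            simp only [Function.mem_support, Set.mem_univ, iff_true]
            have := hpt ω
            intro h
            linarith
          rw [hsupp]
          simp
      rw [integral_sub hg hf'] at hpos
      linarith
    calc F (a * x + b * y) < ∫ ω, (a * expPhi α (Y ω - x) + b * expPhi α (Y ω - y)) ∂μ := hlt
      _ = a * F x + b * F y := by
          rw [integral_add ((hint x).const_mul a) ((hint y).const_mul b),
            integral_const_mul, integral_const_mul]
  -- F is continuous
  have hFcont : Continuous F := by
    rw [← continuousOn_univ]
    exact hFconv.convexOn.continuousOn isOpen_univ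
  -- coercivity: F m ≥ (c/2) * m^2 - K
  set I1 : ℝ := ∫ ω, Y ω ∂μ with hI1
  set K : ℝ := 2 * c * I1 ^ 2 with hK
  have hlb : ∀ m : ℝ, (c / 2) * m ^ 2 - K ≤ F m := by
    intro m
    have h1' : ∫ ω, c * (Y ω - m) ^ 2 ∂μ ≤ F m := by
      refine integral_mono ((hsqint m).const_mul c) (hint m) fun ω => ?_
      exact sq_ge_expPhi ⟨h0, h1⟩ _
    have h2' : ∫ ω, c * (Y ω - m) ^ 2 ∂μ =
        c * ((∫ ω, (Y ω) ^ 2 ∂μ) - 2 * m * I1 + m ^ 2) := by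
      rw [integral_const_mul]
      congr 1
      have : (fun ω => (Y ω - m) ^ 2) = fun ω => (Y ω) ^ 2 - (2 * m) * Y ω + m ^ 2 := by
        funext ω; ring
      have ha' : Integrable (fun ω => Y ω ^ 2 - 2 * m * Y ω) μ := hL2.sub (hYint.const_mul _)
      rw [this, integral_add ha' (integrable_const _),
        integral_sub hL2 (hYint.const_mul _), integral_const_mul, integral_const]
      simp [hI1]
    have hI2nn : 0 ≤ ∫ ω, (Y ω) ^ 2 ∂μ := integral_nonneg fun ω => sq_nonneg _
    nlinarith [sq_nonneg (m - 2 * I1)]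
  have hcoer : Tendsto F (cocompact ℝ) atTop := by
    have hbase : Tendsto (fun m : ℝ => (c / 2) * m ^ 2 - K) (cocompact ℝ) atTop := by
      have h1' : Tendsto (fun s : ℝ => (c / 2) * s ^ 2) atTop atTop :=
        (tendsto_pow_atTop (two_ne_zero)).const_mul_atTop (by linarith)
      have h2' : Tendsto (fun m : ℝ => (c / 2) * m ^ 2) (cocompact ℝ) atTop := by
        have h3' := h1'.comp (tendsto_norm_cocompact_atTop (E := ℝ))
        simp only [Function.comp_def, Real.norm_eq_abs, sq_abs] at h3'
        exact h3'
      simpa [sub_eq_add_neg] using tendsto_atTop_add_const_right _ (-K) h2'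
    exact tendsto_atTop_mono hlb hbase
  obtain ⟨mstar, hmstar⟩ := hFcont.exists_forall_le hcoer
  refine ⟨mstar, fun m' => ?_, fun y hy => ?_⟩
  · rw [key mstar, key m']
    exact hmstar m'
  · simp only [key] at hy
    exact hFconv.eq_of_isMinOn (isMinOn_iff.mpr fun z _ => hy z)
      (isMinOn_iff.mpr fun z _ => hmstar z) (Set.mem_univ _) (Set.mem_univ _)
end

section
/- Let α ∈ (0,1) and let Y be a real random variable on a probability space with E[Y²] < ∞. Then m ∈ ℝ minimizes the function m' ↦ E[φ_α(Y − m')] if and only if α·E[max(Y − m, 0)] = (1−α)·E[max(m − Y, 0)], i.e., if and only if E[ψ_α(Y − m)] = 0. -/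
open MeasureTheory

private lemma pt_lower (α : ℝ) (h0 : 0 < α) (h1 : α < 1) (r t : ℝ) :
    |α - (if r < 0 then (1:ℝ) else 0)| * r ^ 2
      - 2 * |α - (if r < 0 then (1:ℝ) else 0)| * r * t
      + min α (1 - α) * t ^ 2 ≤ |α - (if r - t < 0 then (1:ℝ) else 0)| * (r - t) ^ 2 := by
  have hm1 : min α (1-α) ≤ α := min_le_left _ _
  have hm2 : min α (1-α) ≤ 1 - α := min_le_right _ _
  rcases lt_or_ge r 0 with hr | hr <;> rcases lt_or_ge (r - t) 0 with hrt | hrt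
  · rw [if_pos hr, if_pos hrt, abs_of_neg (by linarith : α - 1 < 0)]
    nlinarith [mul_nonneg (sub_nonneg.mpr hm2) (sq_nonneg t)]
  · rw [if_pos hr, if_neg (not_lt.mpr hrt), sub_zero, abs_of_neg (by linarith : α - 1 < 0),
      abs_of_pos h0]
    nlinarith [mul_nonneg (sub_nonneg.mpr hm1) (sq_nonneg (r-t)),
      mul_nonneg (sub_nonneg.mpr hm2)
        (mul_nonneg (by linarith : (0:ℝ) ≤ -r) (by linarith : (0:ℝ) ≤ r - 2*t))]
  · rw [if_neg (not_lt.mpr hr), if_pos hrt, sub_zero, abs_of_pos h0,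
      abs_of_neg (by linarith : α - 1 < 0)]
    nlinarith [mul_nonneg (sub_nonneg.mpr hm2) (sq_nonneg (r-t)),
      mul_nonneg (sub_nonneg.mpr hm1)
        (mul_nonneg hr (by linarith : (0:ℝ) ≤ 2*t - r))]
  · rw [if_neg (not_lt.mpr hr), if_neg (not_lt.mpr hrt), sub_zero, abs_of_pos h0]
    nlinarith [mul_nonneg (sub_nonneg.mpr hm1) (sq_nonneg t)]

private lemma pt_upper (α : ℝ) (h0 : 0 < α) (h1 : α < 1) (r t : ℝ) :
    |α - (if r - t < 0 then (1:ℝ) else 0)| * (r - t) ^ 2 ≤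
      |α - (if r < 0 then (1:ℝ) else 0)| * r ^ 2
        - 2 * |α - (if r < 0 then (1:ℝ) else 0)| * r * t
        + max α (1 - α) * t ^ 2 := by
  have hm1 : α ≤ max α (1-α) := le_max_left _ _
  have hm2 : 1 - α ≤ max α (1-α) := le_max_right _ _
  rcases lt_or_ge r 0 with hr | hr <;> rcases lt_or_ge (r - t) 0 with hrt | hrt
  · rw [if_pos hr, if_pos hrt, abs_of_neg (by linarith : α - 1 < 0)]
    nlinarith [mul_nonneg (sub_nonneg.mpr hm2) (sq_nonneg t)]
  · rw [if_pos hr, if_neg (not_lt.mpr hrt), sub_zero, abs_of_neg (by linarith : α - 1 < 0),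
      abs_of_pos h0]
    nlinarith [mul_nonneg (sub_nonneg.mpr hm1) (sq_nonneg (r-t)),
      mul_nonneg (sub_nonneg.mpr hm2)
        (mul_nonneg (by linarith : (0:ℝ) ≤ -r) (by linarith : (0:ℝ) ≤ r - 2*t))]
  · rw [if_neg (not_lt.mpr hr), if_pos hrt, sub_zero, abs_of_pos h0,
      abs_of_neg (by linarith : α - 1 < 0)]
    nlinarith [mul_nonneg (sub_nonneg.mpr hm2) (sq_nonneg (r-t)),
      mul_nonneg (sub_nonneg.mpr hm1)
        (mul_nonneg hr (by linarith : (0:ℝ) ≤ 2*t - r))]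
  · rw [if_neg (not_lt.mpr hr), if_neg (not_lt.mpr hrt), sub_zero, abs_of_pos h0]
    nlinarith [mul_nonneg (sub_nonneg.mpr hm1) (sq_nonneg t)]

/-- Let α ∈ (0,1) and let Y be a real random variable with
E[Y²] < ∞. Then m minimizes m' ↦ E[φ_α(Y − m')] if and only if
α·E[max(Y − m, 0)] = (1−α)·E[max(m − Y, 0)], i.e. iff E[ψ_α(Y − m)] = 0,
where φ_α(r) = |α − 𝟙(r<0)|·r² and ψ_α(r) = 2|α − 𝟙(r<0)|·r. -/
theorem expectile_first_order_condition
    {Ω : Type*} [MeasurableSpace Ω] (μ : Measure Ω) [IsProbabilityMeasure μ]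
    (α : ℝ) (hα : α ∈ Set.Ioo (0 : ℝ) 1)
    (Y : Ω → ℝ) (hmeas : AEStronglyMeasurable Y μ)
    (hL2 : Integrable (fun ω => (Y ω) ^ 2) μ) (m : ℝ) :
    ((∀ m' : ℝ,
        ∫ ω, |α - (if Y ω - m < 0 then (1 : ℝ) else 0)| * (Y ω - m) ^ 2 ∂μ ≤
          ∫ ω, |α - (if Y ω - m' < 0 then (1 : ℝ) else 0)| * (Y ω - m') ^ 2 ∂μ) ↔
      α * ∫ ω, max (Y ω - m) 0 ∂μ = (1 - α) * ∫ ω, max (m - Y ω) 0 ∂μ) ∧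
    ((∀ m' : ℝ,
        ∫ ω, |α - (if Y ω - m < 0 then (1 : ℝ) else 0)| * (Y ω - m) ^ 2 ∂μ ≤
          ∫ ω, |α - (if Y ω - m' < 0 then (1 : ℝ) else 0)| * (Y ω - m') ^ 2 ∂μ) ↔
      ∫ ω, 2 * |α - (if Y ω - m < 0 then (1 : ℝ) else 0)| * (Y ω - m) ∂μ = 0) := by
  obtain ⟨hα0, hα1⟩ := hα
  have hc : 0 < min α (1 - α) := lt_min hα0 (by linarith)
  have hM : 0 < max α (1 - α) := lt_of_lt_of_le hα0 (le_max_left _ _)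
  have hYae : AEMeasurable Y μ := hmeas.aemeasurable
  -- measurability of the weight function
  have hind : ∀ t : ℝ, AEMeasurable (fun ω => |α - (if Y ω - t < 0 then (1:ℝ) else 0)|) μ := by
    intro t
    have hs : MeasurableSet {x : ℝ | x - t < 0} :=
      measurableSet_lt (measurable_id.sub measurable_const) measurable_const
    have hmb : Measurable (fun x : ℝ => |α - (if x - t < 0 then (1:ℝ) else 0)|) :=
      (measurable_const.sub (Measurable.ite hs measurable_const measurable_const)).abs
    exact hmb.comp_aemeasurable hYae
  have habs_le : ∀ (x : ℝ), |α - (if x < 0 then (1:ℝ) else 0)| ≤ 1 := by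
    intro x
    split_ifs with h
    · rw [abs_of_neg (by linarith : α - 1 < 0)]; linarith
    · rw [sub_zero, abs_of_pos hα0]; linarith
  -- integrability of Y
  have hYint : Integrable Y μ := by
    refine ((hL2.add (integrable_const 1)).div_const 2).mono' hmeas ?_
    filter_upwards with ω
    simp only [Pi.add_apply]
    rw [Real.norm_eq_abs]
    nlinarith [sq_nonneg (|Y ω| - 1), sq_abs (Y ω)]
  -- integrability of (Y - t)^2
  have hsq : ∀ t : ℝ, Integrable (fun ω => (Y ω - t) ^ 2) μ := by
    intro t
    refine ((hL2.const_mul 2).add (integrable_const (2 * t ^ 2))).mono' ?_ ?_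
    · exact ((hYae.sub aemeasurable_const).pow_const 2).aestronglyMeasurable
    · filter_upwards with ω
      simp only [Pi.add_apply]
      rw [Real.norm_eq_abs, abs_of_nonneg (sq_nonneg _)]
      nlinarith [sq_nonneg (Y ω + t)]
  -- integrability of the loss
  have hInt_f : ∀ t : ℝ,
      Integrable (fun ω => |α - (if Y ω - t < 0 then (1:ℝ) else 0)| * (Y ω - t) ^ 2) μ := by
    intro t
    refine (hsq t).mono' ?_ ?_
    · exact ((hind t).mul ((hYae.sub aemeasurable_const).pow_const 2)).aestronglyMeasurable
    · filter_upwards with ω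
      rw [Real.norm_eq_abs, abs_of_nonneg (mul_nonneg (abs_nonneg _) (sq_nonneg _))]
      exact mul_le_of_le_one_left (sq_nonneg _) (habs_le _)
  -- integrability of ψ
  have hψ : Integrable
      (fun ω => 2 * |α - (if Y ω - m < 0 then (1:ℝ) else 0)| * (Y ω - m)) μ := by
    refine ((hYint.sub (integrable_const m)).abs.const_mul 2).mono' ?_ ?_
    · exact (((hind m).const_mul 2).mul (hYae.sub aemeasurable_const)).aestronglyMeasurable
    · filter_upwards with ω
      simp only [Pi.sub_apply]
      rw [Real.norm_eq_abs, abs_mul, abs_mul, abs_two, abs_abs]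
      have h1 := habs_le (Y ω - m)
      nlinarith [abs_nonneg (Y ω - m), abs_nonneg (α - (if Y ω - m < 0 then (1:ℝ) else 0))]
  -- integrability of positive parts
  have hpos : Integrable (fun ω => max (Y ω - m) 0) μ := by
    refine (hYint.sub (integrable_const m)).abs.mono' ?_ ?_
    · exact ((hYae.sub aemeasurable_const).max aemeasurable_const).aestronglyMeasurable
    · filter_upwards with ω
      simp only [Pi.sub_apply]
      rw [Real.norm_eq_abs, abs_of_nonneg (le_max_right _ _)]
      exact max_le (le_abs_self _) (abs_nonneg _)
  have hneg : Integrable (fun ω => max (m - Y ω) 0) μ := by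
    refine (hYint.sub (integrable_const m)).abs.mono' ?_ ?_
    · exact ((aemeasurable_const.sub hYae).max aemeasurable_const).aestronglyMeasurable
    · filter_upwards with ω
      simp only [Pi.sub_apply]
      rw [Real.norm_eq_abs, abs_of_nonneg (le_max_right _ _)]
      refine max_le ?_ (abs_nonneg _)
      rw [abs_sub_comm]
      exact le_abs_self _
  set Ψ := ∫ ω, 2 * |α - (if Y ω - m < 0 then (1 : ℝ) else 0)| * (Y ω - m) ∂μ with hΨdef
  -- Ψ in terms of positive/negative parts
  have hΨ_eq : Ψ = 2 * (α * ∫ ω, max (Y ω - m) 0 ∂μ)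
      - 2 * ((1 - α) * ∫ ω, max (m - Y ω) 0 ∂μ) := by
    rw [hΨdef]
    have : (fun ω => 2 * |α - (if Y ω - m < 0 then (1 : ℝ) else 0)| * (Y ω - m))
        = fun ω => 2 * α * max (Y ω - m) 0 - 2 * (1 - α) * max (m - Y ω) 0 := by
      funext ω
      split_ifs with h
      · rw [abs_of_neg (by linarith : α - 1 < 0),
          max_eq_right (by linarith : Y ω - m ≤ 0), max_eq_left (by linarith : (0:ℝ) ≤ m - Y ω)]
        ring
      · rw [sub_zero, abs_of_pos hα0,
          max_eq_left (by simpa using not_lt.mp h), max_eq_right (by push_neg at h; linarith)]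
        ring
    have hI1 : Integrable (fun ω => 2 * α * max (Y ω - m) 0) μ := hpos.const_mul _
    have hI2 : Integrable (fun ω => 2 * (1 - α) * max (m - Y ω) 0) μ := hneg.const_mul _
    rw [this, integral_sub hI1 hI2,
      integral_const_mul, integral_const_mul]
    ring
  -- the key equivalence: minimizer ↔ Ψ = 0
  have key : (∀ m' : ℝ,
      ∫ ω, |α - (if Y ω - m < 0 then (1 : ℝ) else 0)| * (Y ω - m) ^ 2 ∂μ ≤
        ∫ ω, |α - (if Y ω - m' < 0 then (1 : ℝ) else 0)| * (Y ω - m') ^ 2 ∂μ) ↔ Ψ = 0 := by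
    constructor
    · intro hmin
      have hkey : ∀ t : ℝ, 0 ≤ -Ψ * t + max α (1 - α) * t ^ 2 := by
        intro t
        have hle : (∫ ω, |α - (if Y ω - (m + t) < 0 then (1:ℝ) else 0)| * (Y ω - (m + t)) ^ 2 ∂μ)
            ≤ ∫ ω, (|α - (if Y ω - m < 0 then (1:ℝ) else 0)| * (Y ω - m) ^ 2
                - (2 * |α - (if Y ω - m < 0 then (1:ℝ) else 0)| * (Y ω - m)) * t
                + max α (1 - α) * t ^ 2) ∂μ := by
          refine integral_mono (hInt_f (m + t))
            (((hInt_f m).sub (hψ.mul_const t)).add (integrable_const _)) ?_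
          intro ω
          have h := pt_upper α hα0 hα1 (Y ω - m) t
          simp only [sub_sub] at h
          calc |α - (if Y ω - (m + t) < 0 then (1:ℝ) else 0)| * (Y ω - (m + t)) ^ 2
              ≤ |α - (if Y ω - m < 0 then (1:ℝ) else 0)| * (Y ω - m) ^ 2
                - 2 * |α - (if Y ω - m < 0 then (1:ℝ) else 0)| * (Y ω - m) * t
                + max α (1 - α) * t ^ 2 := h
            _ = _ := by ring
        have hI1 : Integrable (fun ω => (2 * |α - (if Y ω - m < 0 then (1:ℝ) else 0)| * (Y ω - m)) * t) μ := hψ.mul_const t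
        have hI2 : Integrable (fun ω => |α - (if Y ω - m < 0 then (1:ℝ) else 0)| * (Y ω - m) ^ 2
            - (2 * |α - (if Y ω - m < 0 then (1:ℝ) else 0)| * (Y ω - m)) * t) μ := (hInt_f m).sub hI1
        have hcomp : (∫ ω, (|α - (if Y ω - m < 0 then (1:ℝ) else 0)| * (Y ω - m) ^ 2
                - (2 * |α - (if Y ω - m < 0 then (1:ℝ) else 0)| * (Y ω - m)) * t
                + max α (1 - α) * t ^ 2) ∂μ)
            = (∫ ω, |α - (if Y ω - m < 0 then (1:ℝ) else 0)| * (Y ω - m) ^ 2 ∂μ)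
              - Ψ * t + max α (1 - α) * t ^ 2 := by
          rw [integral_add hI2 (integrable_const _),
            integral_sub (hInt_f m) hI1, integral_mul_const, integral_const]
          simp [hΨdef]
        have hmin' := hmin (m + t)
        rw [hcomp] at hle
        linarith
      have h := hkey (Ψ / (2 * max α (1 - α)))
      have heq : -Ψ * (Ψ / (2 * max α (1 - α)))
          + max α (1 - α) * (Ψ / (2 * max α (1 - α))) ^ 2
          = -(Ψ ^ 2 / (4 * max α (1 - α))) := by
        field_simp
        ring
      rw [heq] at h
      have h4 : (0:ℝ) < 4 * max α (1 - α) := by positivity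
      have h2 : Ψ ^ 2 ≤ 0 := by
        have := mul_le_mul_of_nonneg_right (by linarith : Ψ ^ 2 / (4 * max α (1 - α)) ≤ 0) h4.le
        rw [div_mul_cancel₀ _ (ne_of_gt h4)] at this
        linarith
      exact pow_eq_zero_iff (two_ne_zero) |>.mp (le_antisymm h2 (sq_nonneg Ψ))
    · intro hΨ0 m'
      have hle : (∫ ω, (|α - (if Y ω - m < 0 then (1:ℝ) else 0)| * (Y ω - m) ^ 2
              - (2 * |α - (if Y ω - m < 0 then (1:ℝ) else 0)| * (Y ω - m)) * (m' - m)
              + min α (1 - α) * (m' - m) ^ 2) ∂μ)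
          ≤ ∫ ω, |α - (if Y ω - m' < 0 then (1:ℝ) else 0)| * (Y ω - m') ^ 2 ∂μ := by
        refine integral_mono
          (((hInt_f m).sub (hψ.mul_const _)).add (integrable_const _)) (hInt_f m') ?_
        intro ω
        have h := pt_lower α hα0 hα1 (Y ω - m) (m' - m)
        rw [show Y ω - m - (m' - m) = Y ω - m' from by ring] at h
        calc |α - (if Y ω - m < 0 then (1:ℝ) else 0)| * (Y ω - m) ^ 2
              - (2 * |α - (if Y ω - m < 0 then (1:ℝ) else 0)| * (Y ω - m)) * (m' - m)
              + min α (1 - α) * (m' - m) ^ 2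
            = |α - (if Y ω - m < 0 then (1:ℝ) else 0)| * (Y ω - m) ^ 2
              - 2 * |α - (if Y ω - m < 0 then (1:ℝ) else 0)| * (Y ω - m) * (m' - m)
              + min α (1 - α) * (m' - m) ^ 2 := by ring
          _ ≤ _ := h
      have hI1 : Integrable (fun ω => (2 * |α - (if Y ω - m < 0 then (1:ℝ) else 0)| * (Y ω - m)) * (m' - m)) μ := hψ.mul_const _
      have hI2 : Integrable (fun ω => |α - (if Y ω - m < 0 then (1:ℝ) else 0)| * (Y ω - m) ^ 2
          - (2 * |α - (if Y ω - m < 0 then (1:ℝ) else 0)| * (Y ω - m)) * (m' - m)) μ := (hInt_f m).sub hI1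
      have hcomp : (∫ ω, (|α - (if Y ω - m < 0 then (1:ℝ) else 0)| * (Y ω - m) ^ 2
              - (2 * |α - (if Y ω - m < 0 then (1:ℝ) else 0)| * (Y ω - m)) * (m' - m)
              + min α (1 - α) * (m' - m) ^ 2) ∂μ)
          = (∫ ω, |α - (if Y ω - m < 0 then (1:ℝ) else 0)| * (Y ω - m) ^ 2 ∂μ)
            - Ψ * (m' - m) + min α (1 - α) * (m' - m) ^ 2 := by
        rw [integral_add hI2 (integrable_const _),
          integral_sub (hInt_f m) hI1, integral_mul_const, integral_const]
        simp [hΨdef]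
      rw [hcomp, hΨ0] at hle
      nlinarith [mul_nonneg hc.le (sq_nonneg (m' - m))]
  refine ⟨key.trans ?_, key⟩
  constructor
  · intro h; rw [hΨ_eq] at h; linarith
  · intro h; rw [hΨ_eq, h]; ring
end

section
/- Fix λ > 0 and a > 2, and define H_λ : ℝ → ℝ by H_λ(θ) = ((θ² − 2λ|θ| + λ²)/(2(a−1)))·𝟙(λ ≤ |θ| ≤ aλ) + (λ|θ| − (a+1)λ²/2)·𝟙(|θ| > aλ) (and H_λ(θ) = 0 for |θ| < λ). Then H_λ is convex on ℝ. -/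
open Asymptotics

/-- `x ↦ (max x 0)^2` is differentiable with derivative `2 * max x 0`. -/
lemma hasDerivAt_posSq (x : ℝ) : HasDerivAt (fun x : ℝ => max x 0 ^ 2) (2 * max x 0) x := by
  rcases lt_trichotomy x 0 with hx | hx | hx
  · have h : (fun x : ℝ => max x 0 ^ 2) =ᶠ[nhds x] fun _ => (0 : ℝ) := by
      filter_upwards [eventually_lt_nhds hx] with y hy
      simp [max_eq_right hy.le]
    have h0 : HasDerivAt (fun _ : ℝ => (0 : ℝ)) (2 * max x 0) x := by
      simpa [max_eq_right hx.le] using (hasDerivAt_const x (0 : ℝ))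
    exact h0.congr_of_eventuallyEq h
  · subst hx
    rw [hasDerivAt_iff_isLittleO]
    rw [Asymptotics.isLittleO_iff]
    intro c hc
    have hev : ∀ᶠ y : ℝ in nhds 0, |y| < c :=
      Metric.eventually_nhds_iff.mpr ⟨c, hc, fun {y} hy => by
        simpa [Real.dist_eq] using hy⟩
    filter_upwards [hev] with y hy
    have hb : |max y 0 ^ 2| ≤ c * |y| := by
      rcases le_total y 0 with h | h
      · rw [max_eq_right h]
        simp only [ne_eq, OfNat.ofNat_ne_zero, not_false_eq_true, zero_pow, abs_zero]
        exact mul_nonneg hc.le (abs_nonneg y)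
      · rw [max_eq_left h, abs_of_nonneg (sq_nonneg y), sq]
        have hy' : y < c := by rwa [abs_of_nonneg h] at hy
        rw [abs_of_nonneg h]
        nlinarith
    simpa [Real.norm_eq_abs] using hb
  · have h : (fun x : ℝ => max x 0 ^ 2) =ᶠ[nhds x] fun y => y ^ 2 := by
      filter_upwards [eventually_gt_nhds hx] with y hy
      simp [max_eq_left hy.le]
    have h0 : HasDerivAt (fun y : ℝ => y ^ 2) (2 * max x 0) x := by
      simpa [max_eq_left hx.le, mul_comm] using (hasDerivAt_pow 2 x)
    exact h0.congr_of_eventuallyEq h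

/-- For λ > 0 and a > 2, the SCAD concave-part function
H_λ(θ) = ((θ² − 2λ|θ| + λ²)/(2(a−1)))·𝟙(λ ≤ |θ| ≤ aλ)
        + (λ|θ| − (a+1)λ²/2)·𝟙(|θ| > aλ)
is convex on ℝ. -/
theorem scad_concave_part_convex (lam a : ℝ) (hlam : 0 < lam) (ha : 2 < a) :
    ConvexOn ℝ Set.univ
      (fun t : ℝ =>
        (if lam ≤ |t| ∧ |t| ≤ a * lam then (t ^ 2 - 2 * lam * |t| + lam ^ 2) / (2 * (a - 1))
          else 0)
        + (if a * lam < |t| then lam * |t| - (a + 1) * lam ^ 2 / 2 else 0)) := by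
  have ha1 : (0:ℝ) < a - 1 := by linarith
  have ha1' : (a - 1) ≠ 0 := ne_of_gt ha1
  have h2a : (2 * (a - 1)) ≠ 0 := by positivity
  set F : ℝ → ℝ := fun t =>
    (max (t - lam) 0 ^ 2 + max (-t - lam) 0 ^ 2 - max (t - a*lam) 0 ^ 2
      - max (-t - a*lam) 0 ^ 2) / (2 * (a - 1)) with hF
  set φ : ℝ → ℝ := fun t =>
    (max (t - lam) 0 - max (-t - lam) 0 - max (t - a*lam) 0 + max (-t - a*lam) 0) / (a - 1)
    with hφ
  have hder : ∀ x, HasDerivAt F (φ x) x := by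
    intro x
    have h1 : HasDerivAt (fun t : ℝ => max (t - lam) 0 ^ 2) (2 * max (x - lam) 0) x := by
      simpa [Function.comp_def] using (hasDerivAt_posSq (x - lam)).comp x ((hasDerivAt_id x).sub_const lam)
    have h2 : HasDerivAt (fun t : ℝ => max (-t - lam) 0 ^ 2)
        (2 * max (-x - lam) 0 * (-1)) x :=
      by have := (hasDerivAt_posSq (-x - lam)).comp x ((hasDerivAt_neg x).sub_const lam); exact this
    have h3 : HasDerivAt (fun t : ℝ => max (t - a*lam) 0 ^ 2) (2 * max (x - a*lam) 0) x := by
      simpa [Function.comp_def] using (hasDerivAt_posSq (x - a*lam)).comp x ((hasDerivAt_id x).sub_const (a*lam))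
    have h4 : HasDerivAt (fun t : ℝ => max (-t - a*lam) 0 ^ 2)
        (2 * max (-x - a*lam) 0 * (-1)) x :=
      by have := (hasDerivAt_posSq (-x - a*lam)).comp x ((hasDerivAt_neg x).sub_const (a*lam)); exact this
    have hsum := (((h1.add h2).sub h3).sub h4).div_const (2 * (a - 1))
    have heq : (2 * max (x - lam) 0 + 2 * max (-x - lam) 0 * (-1) - 2 * max (x - a*lam) 0
        - 2 * max (-x - a*lam) 0 * (-1)) / (2 * (a - 1)) = φ x := by
      rw [hφ]
      rw [div_eq_div_iff h2a ha1']
      ring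
    exact heq ▸ hsum
  have hmono : Monotone φ := by
    intro x y hxy
    have key : ∀ u v c d : ℝ, u ≤ v → c ≤ d →
        max (u - c) 0 - max (u - d) 0 ≤ max (v - c) 0 - max (v - d) 0 := by
      intro u v c d huv hcd
      simp only [max_def]
      split_ifs <;> linarith
    have hcd : lam ≤ a * lam := by nlinarith
    have k1 := key x y lam (a*lam) hxy hcd
    have k2 := key (-y) (-x) lam (a*lam) (by linarith) hcd
    rw [hφ]
    have hineq : max (x - lam) 0 - max (-x - lam) 0 - max (x - a*lam) 0 + max (-x - a*lam) 0 ≤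
        max (y - lam) 0 - max (-y - lam) 0 - max (y - a*lam) 0 + max (-y - a*lam) 0 := by
      linarith
    exact div_le_div_of_nonneg_right hineq ha1.le |>.trans_eq rfl
  have hFconv : ConvexOn ℝ Set.univ F := by
    have hdiff : Differentiable ℝ F := fun x => (hder x).differentiableAt
    have hdF : deriv F = φ := funext fun x => (hder x).deriv
    exact Monotone.convexOn_univ_of_deriv hdiff (hdF ▸ hmono)
  have heq : (fun t : ℝ =>
        (if lam ≤ |t| ∧ |t| ≤ a * lam then (t ^ 2 - 2 * lam * |t| + lam ^ 2) / (2 * (a - 1))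
          else 0)
        + (if a * lam < |t| then lam * |t| - (a + 1) * lam ^ 2 / 2 else 0)) = F := by
    funext t
    simp only [hF]
    have halam : lam < a * lam := by nlinarith
    rcases le_total 0 t with ht | ht
    · rw [abs_of_nonneg ht]
      have hntl : -t - lam ≤ 0 := by linarith
      have hnta : -t - a*lam ≤ 0 := by linarith
      rcases lt_or_ge t lam with h1 | h1
      · rw [if_neg (by rintro ⟨h, _⟩; linarith), if_neg (by intro h; linarith)]
        rw [max_eq_right (by linarith), max_eq_right hntl,
          max_eq_right (by linarith), max_eq_right hnta]
        ring
      · rcases le_or_gt t (a*lam) with h2 | h2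
        · rw [if_pos ⟨h1, h2⟩, if_neg (not_lt.mpr h2)]
          rw [max_eq_left (by linarith), max_eq_right hntl,
            max_eq_right (by linarith), max_eq_right hnta]
          rw [add_zero, div_eq_div_iff h2a h2a]
          ring
        · rw [if_neg (by rintro ⟨_, h⟩; linarith), if_pos h2]
          rw [max_eq_left (by linarith), max_eq_right hntl,
            max_eq_left (by linarith), max_eq_right hnta]
          rw [zero_add, eq_div_iff h2a]
          ring
    · rw [abs_of_nonpos ht]
      have htl : t - lam ≤ 0 := by linarith
      have hta : t - a*lam ≤ 0 := by linarith
      rcases lt_or_ge (-t) lam with h1 | h1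
      · rw [if_neg (by rintro ⟨h, _⟩; linarith), if_neg (by intro h; linarith)]
        rw [max_eq_right htl, max_eq_right (by linarith),
          max_eq_right hta, max_eq_right (by linarith)]
        ring
      · rcases le_or_gt (-t) (a*lam) with h2 | h2
        · rw [if_pos ⟨h1, h2⟩, if_neg (not_lt.mpr h2)]
          rw [max_eq_right htl, max_eq_left (by linarith),
            max_eq_right hta, max_eq_right (by linarith)]
          rw [add_zero, div_eq_div_iff h2a h2a]
          ring
        · rw [if_neg (by rintro ⟨_, h⟩; linarith), if_pos h2]
          rw [max_eq_right htl, max_eq_left (by linarith),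
            max_eq_right hta, max_eq_left (by linarith)]
          rw [zero_add, eq_div_iff h2a]
          ring
  rw [heq]
  exact hFconv
end

section
/- Let E be a real inner product space, let k, l : E → ℝ be convex functions, and set L = k − l. Suppose θ* ∈ E has a neighborhood U such that for every θ ∈ U there exists a vector v ∈ E that is simultaneously a subgradient of l at θ and a subgradient of k at θ* (i.e., ∂l(θ) ∩ ∂k(θ*) ≠ ∅ for all θ ∈ U). Then θ* is a local minimizer of L. -/
/-- Tao–An sufficient condition for a local minimizer of a DC
function: Let E be a real inner product space, k, l : E → ℝ convex, and
L = k − l. If θ* has a neighborhood U such that for every θ ∈ U there is a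
vector v that is simultaneously a subgradient of l at θ and a subgradient of
k at θ*, then θ* is a local minimizer of L. -/
theorem dc_local_minimizer_sufficient_condition
    {E : Type*} [NormedAddCommGroup E] [InnerProductSpace ℝ E]
    (k l : E → ℝ) (hk : ConvexOn ℝ Set.univ k) (hl : ConvexOn ℝ Set.univ l)
    (θs : E) (U : Set E) (hU : U ∈ nhds θs)
    (hsub : ∀ θ ∈ U, ∃ v : E,
      (∀ θ' : E, l θ' ≥ l θ + (inner ℝ v (θ' - θ) : ℝ)) ∧
      (∀ θ' : E, k θ' ≥ k θs + (inner ℝ v (θ' - θs) : ℝ))) :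
    IsLocalMin (fun θ => k θ - l θ) θs := by
  filter_upwards [hU] with θ hθ
  obtain ⟨v, hlv, hkv⟩ := hsub θ hθ
  have h1 := hlv θs
  have h2 := hkv θ
  have : (inner ℝ v (θs - θ) : ℝ) = -(inner ℝ v (θ - θs) : ℝ) := by
    rw [← inner_neg_right, neg_sub]
  linarith [this ▸ h1]
end
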